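/- For the uniform distribution on [a,b], the value recurrence v_{n+1} = v_n + (b - v_n)²/(2(b-a)) (with a ≤ v_0 < b) satisfies n·(b - v_n) → 2(b-a) as n → ∞. -/

import Mathlib

open Filter Finset

/-- For the uniform distribution on `[a,b]`, the value recurrence
`v_{n+1} = v_n + (b - v_n)²/(2(b-a))` with `a ≤ v_0 < b` satisfies
`n (b - v_n) → 2(b-a)`. -/
theorem stmt_3 (a b : ℝ) (hab : a < b) (v : ℕ → ℝ) (hv0 : a ≤ v 0) (hv0' : v 0 < b)
    (hrec : ∀ n, v (n + 1) = v n + (b - v n) ^ 2 / (2 * (b - a))) :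
    Tendsto (fun n : ℕ => (n : ℝ) * (b - v n)) atTop (nhds (2 * (b - a))) := by
  set c : ℝ := 2 * (b - a) with hc
  have hc0 : (0:ℝ) < c := by simp only [hc]; linarith
  set w : ℕ → ℝ := fun n => b - v n with hw
  have hwrec : ∀ n, w (n + 1) = w n - w n ^ 2 / c := by
    intro n
    simp only [hw, hrec n]
    ring
  have hpos : ∀ n, 0 < w n ∧ w n ≤ b - a := by
    intro n
    induction n with
    | zero => exact ⟨by simp [hw]; linarith, by simp [hw]; linarith⟩
    | succ n ih =>
      obtain ⟨h1, h2⟩ := ih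
      have hcb : w n ≤ c / 2 := by
        rw [hc]
        calc w n ≤ b - a := h2
          _ = 2 * (b - a) / 2 := by ring
      constructor
      · have key : w (n + 1) = w n * (1 - w n / c) := by
          rw [hwrec n]; field_simp
        rw [key]
        apply mul_pos h1
        have : w n / c ≤ 1 / 2 := by
          rw [div_le_div_iff₀ hc0 (by norm_num)]; linarith
        linarith
      · rw [hwrec n]
        have : 0 ≤ w n ^ 2 / c := by positivity
        linarith
  have hanti : Antitone w := antitone_nat_of_succ_le (fun n => by
    rw [hwrec n]
    have : 0 ≤ w n ^ 2 / c := by positivity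
    linarith)
  have hbdd : BddBelow (Set.range w) := ⟨0, by rintro x ⟨n, rfl⟩; exact (hpos n).1.le⟩
  have hlim : Tendsto w atTop (nhds (⨅ n, w n)) := tendsto_atTop_ciInf hanti hbdd
  set L := ⨅ n, w n with hL
  have hL0 : L = 0 := by
    have h1 : Tendsto (fun n => w (n + 1)) atTop (nhds L) :=
      hlim.comp (tendsto_add_atTop_nat 1)
    have h2 : Tendsto (fun n => w n - w n ^ 2 / c) atTop (nhds (L - L ^ 2 / c)) :=
      hlim.sub ((hlim.pow 2).div_const c)
    have heq : L - L ^ 2 / c = L :=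
      tendsto_nhds_unique (h2.congr (fun n => (hwrec n).symm)) h1
    have hLsq : L ^ 2 / c = 0 := by linarith
    field_simp at hLsq
    simpa using hLsq
  rw [hL0] at hlim
  -- d n := 1/(c - w n) tends to 1/c
  have hwc : ∀ n, w n < c := fun n => lt_of_le_of_lt (hpos n).2 (by simp only [hc]; linarith)
  have hd : Tendsto (fun n => (c - w n)⁻¹) atTop (nhds c⁻¹) := by
    have : Tendsto (fun n => c - w n) atTop (nhds (c - 0)) := tendsto_const_nhds.sub hlim
    rw [sub_zero] at this
    exact this.inv₀ hc0.ne'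
  -- telescoping: (w (n+1))⁻¹ - (w n)⁻¹ = (c - w n)⁻¹
  have hstep : ∀ n, (w (n + 1))⁻¹ - (w n)⁻¹ = (c - w n)⁻¹ := by
    intro n
    have h1 := (hpos n).1
    have h2 := (hpos (n + 1)).1
    have h3 : c - w n > 0 := by linarith [hwc n]
    have key : w (n + 1) * c = w n * (c - w n) := by
      rw [hwrec n]; field_simp
    field_simp
    nlinarith [key]
  have hsum : ∀ n, ∑ i ∈ range n, (c - w i)⁻¹ = (w n)⁻¹ - (w 0)⁻¹ := by
    intro n
    rw [← Finset.sum_range_sub (fun n => (w n)⁻¹)]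
    exact Finset.sum_congr rfl (fun i _ => (hstep i).symm)
  have hces : Tendsto (fun n : ℕ => (n : ℝ)⁻¹ * ∑ i ∈ range n, (c - w i)⁻¹) atTop (nhds c⁻¹) :=
    hd.cesaro
  have hun : Tendsto (fun n : ℕ => (n : ℝ)⁻¹ * (w n)⁻¹) atTop (nhds c⁻¹) := by
    have h0 : Tendsto (fun n : ℕ => (n : ℝ)⁻¹ * (w 0)⁻¹) atTop (nhds 0) := by
      have := tendsto_inv_atTop_zero.comp (tendsto_natCast_atTop_atTop (R := ℝ))
      simpa using this.mul_const (w 0)⁻¹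
    have := hces.add h0
    rw [add_zero] at this
    refine this.congr (fun n => ?_)
    rw [hsum n]
    ring
  have hfin : Tendsto (fun n : ℕ => ((n : ℝ)⁻¹ * (w n)⁻¹)⁻¹) atTop (nhds c⁻¹⁻¹) :=
    hun.inv₀ (by positivity)
  rw [inv_inv] at hfin
  refine hfin.congr' ?_
  filter_upwards [Ioi_mem_atTop 0] with n hn
  have hn' : (0:ℝ) < n := by exact_mod_cast hn
  have := (hpos n).1
  rw [mul_inv, inv_inv, inv_inv]
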